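/- For every paratopological group (G, τ) there exists a unique topology τ♭ on G such that: (G, τ♭) is a topological group, τ♭ ⊆ τ, and for every continuous group homomorphism h from (G,τ) to a topological group T, h is also continuous as a map from (G, τ♭) to T. Equivalently, τ♭ is the strongest group topology on G weaker than τ. -/

import Mathlib

universe u v

/-- For every paratopological group `(G, τ)` there is a unique topology `τ♭` on `G` such that
`(G, τ♭)` is a topological group, `τ♭` is weaker than `τ`, every continuous homomorphism from
`(G, τ)` to a topological group remains continuous from `(G, τ♭)`, and `τ♭` is the strongest
group topology weaker than `τ`.  (Recall that in Mathlib `τ ≤ t` means `τ` is finer than `t`,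
i.e., `t` is weaker than `τ`, and `t ≤ t'` means `t` is stronger than `t'`.) -/
theorem stmt_4 {G : Type u} [Group G] (τ : TopologicalSpace G) (hG : @ContinuousMul G τ _) :
    ∃! t : TopologicalSpace G,
      @IsTopologicalGroup G t _ ∧ τ ≤ t ∧
        (∀ (T : Type v) [Group T] [tT : TopologicalSpace T] [@IsTopologicalGroup T tT _]
          (h : G →* T), @Continuous G T τ tT h → @Continuous G T t tT h) ∧
        (∀ t' : TopologicalSpace G, τ ≤ t' → @IsTopologicalGroup G t' _ → t ≤ t') := by
  set S : Set (TopologicalSpace G) := {t' | τ ≤ t' ∧ @IsTopologicalGroup G t' _} with hS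
  refine ⟨sInf S, ⟨?_, ?_, ?_, ?_⟩, ?_⟩
  · exact topologicalGroup_sInf fun t ht => ht.2
  · exact le_sInf fun t ht => ht.1
  · intro T _ tT _ h hc
    have hmem : tT.induced h ∈ S := by
      constructor
      · exact continuous_iff_le_induced.mp hc
      · exact topologicalGroup_induced h
    have hle : sInf S ≤ tT.induced h := sInf_le hmem
    exact continuous_iff_le_induced.mpr hle
  · intro t' h1 h2
    exact sInf_le ⟨h1, h2⟩
  · rintro t ⟨ht1, ht2, _, ht4⟩
    have h1 : t ≤ sInf S := ht4 _ (le_sInf fun s hs => hs.1) (topologicalGroup_sInf fun s hs => hs.2)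
    have h2 : sInf S ≤ t := sInf_le ⟨ht2, ht1⟩
    exact le_antisymm h1 h2
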